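/- arXiv:1411.7679 — 3 statements merged into one kernel-verified Lean document; each statement's English description precedes it below -/
import Mathlib

section
/- Let γ > 1. For real numbers a > 0, b > 0 (representing the densities ρ and ρ̄) and a', b' ∈ ℝ (representing their spatial derivatives), the following pointwise algebraic identity holds: (γ a^{γ-1} a' - (a/b) γ b^{γ-1} b') · (γ-1)(a^{γ-2} a' - b^{γ-2} b') = γ(γ-1) (a^{γ-3/2} a' - √a · b^{γ-2} b')². -/
open Real

/-- Pointwise perfect-square identity: for densities `a, b > 0` and derivatives `a', b'`,
`(γ a^(γ-1) a' - (a/b) γ b^(γ-1) b') ⬝ (γ-1)(a^(γ-2) a' - b^(γ-2) b')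
  = γ(γ-1) (a^(γ-3/2) a' - √a b^(γ-2) b')²`. -/
theorem stmt_2 (γ a b a' b' : ℝ) (hγ : 1 < γ) (ha : 0 < a) (hb : 0 < b) :
    (γ * a ^ (γ - 1) * a' - (a / b) * (γ * b ^ (γ - 1) * b')) *
      ((γ - 1) * (a ^ (γ - 2) * a' - b ^ (γ - 2) * b'))
    = γ * (γ - 1) * (a ^ (γ - 3/2) * a' - Real.sqrt a * b ^ (γ - 2) * b') ^ 2 := by
  have h1 : a ^ (γ - 1) = a * a ^ (γ - 2) := by
    rw [show γ - 1 = 1 + (γ - 2) by ring, Real.rpow_add ha, Real.rpow_one]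
  have h2 : a ^ (γ - 3/2) = Real.sqrt a * a ^ (γ - 2) := by
    rw [show γ - 3/2 = 1/2 + (γ - 2) by ring, Real.rpow_add ha,
      ← Real.sqrt_eq_rpow]
  have h3 : b ^ (γ - 1) = b * b ^ (γ - 2) := by
    rw [show γ - 1 = 1 + (γ - 2) by ring, Real.rpow_add hb, Real.rpow_one]
  have h4 : Real.sqrt a * Real.sqrt a = a := Real.mul_self_sqrt ha.le
  rw [h1, h2, h3]
  field_simp
  ring_nf
  rw [Real.sq_sqrt ha.le]
  ring
end

section
/- Let γ > 1 and let ρ̄ > 0 be fixed. There exist constants c₁, c₂ > 0 (depending on γ and ρ̄) such that for all R ≥ -ρ̄: F(ρ̄,R) ≥ c₁ R² when |R| ≤ ρ̄/2, and F(ρ̄,R) ≥ c₂ (R+ρ̄)^γ when R ≥ ρ̄ (equivalently when ρ = R+ρ̄ ≥ 2ρ̄). -/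
open Real

/-- Linear lower bounds on `t^β - 1` in terms of `t - 1` on `[1/2, 3/2]`. -/
lemma bern_lower (β : ℝ) (hβ : 0 < β) :
    ∃ c : ℝ, 0 < c ∧ ∀ t ∈ Set.Icc (1/2 : ℝ) (3/2),
      (1 ≤ t → c * (t - 1) ≤ t ^ β - 1) ∧ (t ≤ 1 → c * (1 - t) ≤ 1 - t ^ β) := by
  have h32 : (1:ℝ) < (3/2 : ℝ) ^ β := by
    rw [Real.one_lt_rpow_iff_of_pos (by norm_num)]
    exact Or.inl ⟨by norm_num, hβ⟩
  refine ⟨min β (min 1 (2 * ((3/2 : ℝ) ^ β - 1))),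
    lt_min hβ (lt_min one_pos (by linarith)), ?_⟩
  rintro t ⟨ht1, ht2⟩
  set c := min β (min 1 (2 * ((3/2 : ℝ) ^ β - 1))) with hc
  have hcβ : c ≤ β := min_le_left _ _
  have hc1 : c ≤ 1 := le_trans (min_le_right _ _) (min_le_left _ _)
  have hc3 : c ≤ 2 * ((3/2 : ℝ) ^ β - 1) := le_trans (min_le_right _ _) (min_le_right _ _)
  have ht0 : (0:ℝ) < t := by linarith
  constructor
  · intro h1t
    rcases le_or_gt 1 β with hβ1 | hβ1
    · -- Bernoulli: t^β ≥ 1 + β (t-1)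
      have := one_add_mul_self_le_rpow_one_add (s := t - 1) (by linarith) hβ1
      have heq : (1 + (t - 1)) = t := by ring
      rw [heq] at this
      nlinarith [mul_le_mul_of_nonneg_right hcβ (by linarith : (0:ℝ) ≤ t - 1)]
    · -- chord of concave t^β between 1 and 3/2
      have hcon := (Real.concaveOn_rpow hβ.le hβ1.le).2
        (show (1:ℝ) ∈ Set.Ici (0:ℝ) by norm_num)
        (show (3/2:ℝ) ∈ Set.Ici (0:ℝ) by norm_num)
        (show (0:ℝ) ≤ 3 - 2*t by linarith)
        (show (0:ℝ) ≤ 2*(t-1) by linarith)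
        (show (3 - 2*t) + 2*(t-1) = 1 by ring)
      simp only [smul_eq_mul, Real.one_rpow] at hcon
      have heq : (3 - 2*t) * 1 + 2*(t-1) * (3/2 : ℝ) = t := by ring
      rw [heq] at hcon
      nlinarith [mul_le_mul_of_nonneg_right hc3 (by linarith : (0:ℝ) ≤ t - 1)]
  · intro ht1'
    rcases le_or_gt 1 β with hβ1 | hβ1
    · -- t^β ≤ t for t ≤ 1, β ≥ 1
      have : t ^ β ≤ t ^ (1:ℝ) := Real.rpow_le_rpow_of_exponent_ge ht0 ht1' hβ1
      rw [Real.rpow_one] at this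
      nlinarith [mul_le_mul_of_nonneg_right hc1 (by linarith : (0:ℝ) ≤ 1 - t)]
    · -- t^β ≤ 1 + β(t-1) for 0 < β < 1
      have := rpow_one_add_le_one_add_mul_self (s := t - 1) (by linarith) hβ.le hβ1.le
      have heq : (1 + (t - 1)) = t := by ring
      rw [heq] at this
      nlinarith [mul_le_mul_of_nonneg_right hcβ (by linarith : (0:ℝ) ≤ 1 - t)]

/-- Quadratic coercivity on `[1/2, 3/2]`. -/
lemma key1 (γ : ℝ) (hγ : 1 < γ) :
    ∃ K : ℝ, 0 < K ∧ ∀ t ∈ Set.Icc (1/2 : ℝ) (3/2),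
      K * (t - 1) ^ 2 ≤ t ^ γ - 1 - γ * (t - 1) := by
  have hγ0 : (0:ℝ) < γ := by linarith
  obtain ⟨c, hc, hcp⟩ := bern_lower (γ - 1) (by linarith)
  refine ⟨γ * c / 2, by positivity, ?_⟩
  set K := γ * c / 2 with hK
  set g : ℝ → ℝ := fun t => t ^ γ - 1 - γ * (t - 1) - K * (t - 1) ^ 2 with hg
  have hg' : ∀ x : ℝ, 0 < x →
      HasDerivAt g (γ * x ^ (γ - 1) - γ - K * (2 * (x - 1))) x := by
    intro x hx
    have h1 : HasDerivAt (fun t : ℝ => t ^ γ) (γ * x ^ (γ - 1)) x := by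
      simpa [mul_comm] using Real.hasDerivAt_rpow_const (p := γ) (Or.inl hx.ne')
    have h2 : HasDerivAt (fun t : ℝ => γ * (t - 1)) γ x := by
      simpa using ((hasDerivAt_id x).sub_const 1).const_mul γ
    have h3 : HasDerivAt (fun t : ℝ => K * (t - 1) ^ 2) (K * (2 * (x - 1))) x := by
      have := (((hasDerivAt_id x).sub_const 1).pow 2).const_mul K
      simpa [mul_comm, mul_assoc] using this
    exact ((h1.sub_const 1).sub h2).sub h3
  have hgc : ∀ s : Set ℝ, (∀ x ∈ s, (0:ℝ) < x) → ContinuousOn g s := fun s hs x hx =>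
    ((hg' x (hs x hx)).continuousAt).continuousWithinAt
  have hgd : ∀ s : Set ℝ, (∀ x ∈ s, (0:ℝ) < x) → DifferentiableOn ℝ g s := fun s hs x hx =>
    ((hg' x (hs x hx)).differentiableAt).differentiableWithinAt
  have hg1 : g 1 = 0 := by simp [hg, Real.one_rpow]
  -- monotone on [1, 3/2]
  have hmono : MonotoneOn g (Set.Icc 1 (3/2)) := by
    apply monotoneOn_of_deriv_nonneg (convex_Icc _ _)
      (hgc _ (fun x hx => by have := hx.1; linarith))
      ((hgd _ (fun x hx => by
        rw [interior_Icc] at hx; have := hx.1; linarith)))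
    intro x hx
    rw [interior_Icc] at hx
    have hx0 : (0:ℝ) < x := by linarith [hx.1]
    rw [(hg' x hx0).deriv]
    have hb := (hcp x ⟨by linarith [hx.1], hx.2.le⟩).1 hx.1.le
    nlinarith [mul_le_mul_of_nonneg_left hb hγ0.le]
  -- antitone on [1/2, 1]
  have hanti : AntitoneOn g (Set.Icc (1/2) 1) := by
    apply antitoneOn_of_deriv_nonpos (convex_Icc _ _)
      (hgc _ (fun x hx => by have := hx.1; linarith))
      ((hgd _ (fun x hx => by
        rw [interior_Icc] at hx; have := hx.1; linarith)))
    intro x hx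
    rw [interior_Icc] at hx
    have hx0 : (0:ℝ) < x := by linarith [hx.1]
    rw [(hg' x hx0).deriv]
    have hb := (hcp x ⟨hx.1.le, by linarith [hx.2]⟩).2 hx.2.le
    nlinarith [mul_le_mul_of_nonneg_left hb hγ0.le]
  rintro t ⟨ht1, ht2⟩
  have hgt : 0 ≤ g t := by
    rcases le_or_gt 1 t with h | h
    · have := hmono (Set.mem_Icc.2 ⟨le_refl 1, by norm_num⟩) (Set.mem_Icc.2 ⟨h, ht2⟩) h
      linarith [hg1 ▸ this]
    · have := hanti (Set.mem_Icc.2 ⟨ht1, h.le⟩) (Set.mem_Icc.2 ⟨by norm_num, le_refl 1⟩) h.le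
      linarith [hg1 ▸ this]
  simp only [hg] at hgt
  linarith

/-- Coercivity at large densities. -/
lemma key2 (γ : ℝ) (hγ : 1 < γ) (t : ℝ) (ht : 2 ≤ t) :
    ((2:ℝ) ^ γ - γ - 1) / (2:ℝ) ^ γ * t ^ γ ≤ t ^ γ - 1 - γ * (t - 1) := by
  have hγ0 : (0:ℝ) < γ := by linarith
  have h2γ : (0:ℝ) < (2:ℝ) ^ γ := Real.rpow_pos_of_pos (by norm_num) γ
  have ht0 : (0:ℝ) ≤ t / 2 := by linarith
  have htγ : t ^ γ = (2:ℝ) ^ γ * (t/2) ^ γ := by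
    rw [← Real.mul_rpow (by norm_num) ht0]
    congr 1
    ring
  have hbern : 1 + γ * (t/2 - 1) ≤ (t/2) ^ γ := by
    have := one_add_mul_self_le_rpow_one_add (s := t/2 - 1) (by linarith) hγ.le
    have heq : (1 + (t/2 - 1)) = t/2 := by ring
    rwa [heq] at this
  rw [htγ]
  have key : (γ + 1) * (t/2) ^ γ ≥ 1 + γ * (t - 1) := by
    nlinarith [mul_le_mul_of_nonneg_left hbern (by linarith : (0:ℝ) ≤ γ + 1),
      mul_nonneg (mul_nonneg hγ0.le (by linarith : (0:ℝ) ≤ γ - 1))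
        (by linarith : (0:ℝ) ≤ t - 2)]
  have : ((2:ℝ) ^ γ - γ - 1) / (2:ℝ) ^ γ * ((2:ℝ) ^ γ * (t/2) ^ γ)
      = ((2:ℝ) ^ γ - γ - 1) * (t/2) ^ γ := by
    field_simp
  rw [this]
  nlinarith

/-- Coercivity of the relative pressure `F(ρ̄,R)`: there are `c₁, c₂ > 0` with
`F(ρ̄,R) ≥ c₁ R²` for `|R| ≤ ρ̄/2` and `F(ρ̄,R) ≥ c₂ (R+ρ̄)^γ` for `R ≥ ρ̄`. -/
theorem stmt_3 (γ ρb : ℝ) (hγ : 1 < γ) (hρb : 0 < ρb) :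
    ∃ c₁ c₂ : ℝ, 0 < c₁ ∧ 0 < c₂ ∧
      ∀ R : ℝ, -ρb ≤ R →
        ((|R| ≤ ρb / 2 →
            c₁ * R ^ 2 ≤ (1/γ) * (R + ρb) ^ γ - ρb ^ (γ - 1) * R - (1/γ) * ρb ^ γ) ∧
         (ρb ≤ R →
            c₂ * (R + ρb) ^ γ ≤ (1/γ) * (R + ρb) ^ γ - ρb ^ (γ - 1) * R - (1/γ) * ρb ^ γ)) := by
  have hγ0 : (0:ℝ) < γ := by linarith
  obtain ⟨K, hK, hkey1⟩ := key1 γ hγ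
  have h2γ : (0:ℝ) < (2:ℝ) ^ γ := Real.rpow_pos_of_pos (by norm_num) γ
  have h2γ' : (1:ℝ) + γ < (2:ℝ) ^ γ := by
    have := one_add_mul_self_lt_rpow_one_add (s := (1:ℝ)) (by norm_num) (by norm_num) hγ
    norm_num at this
    linarith
  have hP : (0:ℝ) < ρb ^ γ := Real.rpow_pos_of_pos hρb γ
  refine ⟨K * ρb ^ γ / (γ * ρb ^ 2), ((2:ℝ) ^ γ - γ - 1) / (γ * (2:ℝ) ^ γ),
    by positivity, div_pos (by linarith) (by positivity), ?_⟩
  intro R hR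
  set t : ℝ := (R + ρb) / ρb with htdef
  have hmt : ρb * t = R + ρb := by rw [htdef]; field_simp
  have e3 : R = ρb * (t - 1) := by rw [mul_sub]; rw [hmt]; ring
  have ht0 : 0 ≤ t := by
    apply div_nonneg _ hρb.le; linarith
  have e1 : (R + ρb) ^ γ = ρb ^ γ * t ^ γ := by
    rw [← Real.mul_rpow hρb.le ht0, hmt]
  have e2 : ρb ^ (γ - 1) = ρb ^ γ / ρb := by
    rw [Real.rpow_sub hρb, Real.rpow_one]
  constructor
  · intro habs
    obtain ⟨habs1, habs2⟩ := abs_le.1 habs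
    have htmem : t ∈ Set.Icc (1/2 : ℝ) (3/2) := by
      constructor
      · rw [le_div_iff₀ hρb]; linarith
      · rw [div_le_iff₀ hρb]; linarith
    have h := hkey1 t htmem
    have hmul := mul_le_mul_of_nonneg_left h (by positivity : (0:ℝ) ≤ ρb ^ γ / γ)
    calc K * ρb ^ γ / (γ * ρb ^ 2) * R ^ 2
        = ρb ^ γ / γ * (K * (t - 1) ^ 2) := by rw [e3]; field_simp
      _ ≤ ρb ^ γ / γ * (t ^ γ - 1 - γ * (t - 1)) := hmul
      _ = (1/γ) * (R + ρb) ^ γ - ρb ^ (γ - 1) * R - (1/γ) * ρb ^ γ := by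
          rw [e1, e2, e3]; field_simp; ring
  · intro hRb
    have ht2 : 2 ≤ t := by rw [le_div_iff₀ hρb]; linarith
    have h := key2 γ hγ t ht2
    have hmul := mul_le_mul_of_nonneg_left h (by positivity : (0:ℝ) ≤ ρb ^ γ / γ)
    calc ((2:ℝ) ^ γ - γ - 1) / (γ * (2:ℝ) ^ γ) * (R + ρb) ^ γ
        = ρb ^ γ / γ * (((2:ℝ) ^ γ - γ - 1) / (2:ℝ) ^ γ * t ^ γ) := by
          rw [e1]; field_simp
      _ ≤ ρb ^ γ / γ * (t ^ γ - 1 - γ * (t - 1)) := hmul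
      _ = (1/γ) * (R + ρb) ^ γ - ρb ^ (γ - 1) * R - (1/γ) * ρb ^ γ := by
          rw [e1, e2, e3]; field_simp; ring
end

section
/- Let μ > 0, γ > 1, a > 0, and let (ρ,u) be a C² solution with ρ > 0 of the 1D compressible Navier-Stokes system ∂_t ρ + ∂_x(ρu) = 0, ∂_t(ρu) + ∂_x(ρu²) - ∂_x(μρ^γ ∂_x u) + ∂_x(aρ^γ) = 0. Define v = u + (μ/(γ-1)) ∂_x(ρ^{γ-1}). Then v satisfies the damped transport (Euler-type) equation ρ ∂_t v + ρ u ∂_x v + ∂_x(a ρ^γ) = 0 pointwise. -/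
open Real

private lemma NS_deriv_slice_eq_fderiv {f : ℝ × ℝ → ℝ} {p : ℝ × ℝ}
    (hf : DifferentiableAt ℝ f p) :
    deriv (fun y => f (p.1, y)) p.2 = fderiv ℝ f p (0, 1) := by
  have h1 : HasDerivAt (fun y : ℝ => ((p.1, y) : ℝ × ℝ)) (0, 1) p.2 :=
    (hasDerivAt_const _ _).prodMk (hasDerivAt_id _)
  have := hf.hasFDerivAt.comp_hasDerivAt p.2 (by simpa using h1)
  simpa [Function.comp_def] using this.deriv

private lemma NS_deriv_swap {f : ℝ → ℝ → ℝ} (hf : ContDiff ℝ 2 (Function.uncurry f)) (t x : ℝ) :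
    deriv (fun s => deriv (fun y => f s y) x) t = deriv (fun y => deriv (fun s => f s y) t) x := by
  set F := Function.uncurry f with hF
  have hdF : Differentiable ℝ F := hf.differentiable two_ne_zero
  have hdF' : ContDiff ℝ 1 (fderiv ℝ F) := hf.fderiv_right (le_refl _)
  have symm : ∀ v w : ℝ × ℝ, fderiv ℝ (fderiv ℝ F) (t, x) v w
      = fderiv ℝ (fderiv ℝ F) (t, x) w v := by
    apply second_derivative_symmetric (f := F) (fun y => (hdF y).hasFDerivAt)
    exact ((hdF'.differentiable one_ne_zero) (t, x)).hasFDerivAt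
  have key : ∀ (v w : ℝ × ℝ), ∀ c : ℝ → ℝ × ℝ, (∀ s:ℝ, HasDerivAt c v s) →
      ∀ s : ℝ, HasDerivAt (fun s => fderiv ℝ F (c s) w) (fderiv ℝ (fderiv ℝ F) (c s) v w) s := by
    intro v w c hc s
    have h1 : HasDerivAt (fun s => fderiv ℝ F (c s)) (fderiv ℝ (fderiv ℝ F) (c s) v) s :=
      (((hdF'.differentiable one_ne_zero) (c s)).hasFDerivAt).comp_hasDerivAt s (hc s)
    simpa using h1.clm_apply (hasDerivAt_const s w)
  have e1 : ∀ s y : ℝ, deriv (fun y => f s y) y = fderiv ℝ F (s, y) (0, 1) := by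
    intro s y
    exact NS_deriv_slice_eq_fderiv (p := (s, y)) (hdF (s, y))
  have e2 : ∀ s y : ℝ, deriv (fun s => f s y) s = fderiv ℝ F (s, y) (1, 0) := by
    intro s y
    have h1 : HasDerivAt (fun s : ℝ => ((s, y) : ℝ × ℝ)) (1, 0) s :=
      (hasDerivAt_id _).prodMk (hasDerivAt_const _ _)
    have := (hdF (s, y)).hasFDerivAt.comp_hasDerivAt s h1
    exact this.deriv
  have c1 : ∀ s : ℝ, HasDerivAt (fun s : ℝ => ((s, x) : ℝ × ℝ)) (1, 0) s := fun s =>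
    (hasDerivAt_id _).prodMk (hasDerivAt_const _ _)
  have c2 : ∀ y : ℝ, HasDerivAt (fun y : ℝ => ((t, y) : ℝ × ℝ)) (0, 1) y := fun y =>
    (hasDerivAt_const _ _).prodMk (hasDerivAt_id _)
  calc deriv (fun s => deriv (fun y => f s y) x) t
      = deriv (fun s => fderiv ℝ F (s, x) (0, 1)) t := by
        congr 1; ext s; exact e1 s x
    _ = fderiv ℝ (fderiv ℝ F) (t, x) (1, 0) (0, 1) :=
        (key (1,0) (0,1) _ c1 t).deriv
    _ = fderiv ℝ (fderiv ℝ F) (t, x) (0, 1) (1, 0) := symm (1,0) (0,1)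
    _ = deriv (fun y => fderiv ℝ F (t, y) (1, 0)) x :=
        ((key (0,1) (1,0) _ c2 x).deriv).symm
    _ = deriv (fun y => deriv (fun s => f s y) t) x := by
        congr 1; ext y; exact (e2 t y).symm

private lemma NS_diffT {f : ℝ → ℝ → ℝ} (hf : ContDiff ℝ 2 (Function.uncurry f)) (x : ℝ) :
    Differentiable ℝ (fun s => deriv (fun y => f s y) x) := by
  have hdF : Differentiable ℝ (Function.uncurry f) := hf.differentiable two_ne_zero
  have e1 : ∀ s : ℝ, deriv (fun y => f s y) x = fderiv ℝ (Function.uncurry f) (s, x) (0, 1) :=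
    fun s => NS_deriv_slice_eq_fderiv (p := (s, x)) (hdF (s, x))
  have : (fun s => deriv (fun y => f s y) x)
      = fun s => fderiv ℝ (Function.uncurry f) (s, x) (0, 1) := funext e1
  rw [this]
  have h2 : Differentiable ℝ (fun s : ℝ => fderiv ℝ (Function.uncurry f) (s, x)) :=
    ((hf.fderiv_right (le_refl _)).differentiable one_ne_zero).comp
      ((differentiable_id.prodMk (differentiable_const x)))
  exact h2.clm_apply (differentiable_const _)

private lemma NS_sliceX {f : ℝ → ℝ → ℝ} (hf : ContDiff ℝ 2 (Function.uncurry f)) (t : ℝ) :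
    ContDiff ℝ 2 (fun y => f t y) := hf.comp (contDiff_prodMk_right t)

private lemma NS_sliceT {f : ℝ → ℝ → ℝ} (hf : ContDiff ℝ 2 (Function.uncurry f)) (x : ℝ) :
    ContDiff ℝ 2 (fun s => f s x) := hf.comp (contDiff_prodMk_left x)

private lemma NS_derivC1 {f : ℝ → ℝ} (hf : ContDiff ℝ 2 f) : ContDiff ℝ 1 (deriv f) := by
  have : ContDiff ℝ ((1 : WithTop ℕ∞) + 1) f := by exact_mod_cast hf
  exact (contDiff_succ_iff_deriv.mp this).2.2

/-- For smooth positive solutions of 1D compressible Navier-Stokes with viscosity `μρ^γ` and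
pressure `aρ^γ`, the effective velocity `v = u + (μ/(γ-1)) ∂ₓ(ρ^(γ-1))` satisfies the
transport equation `ρ ∂ₜv + ρ u ∂ₓv + ∂ₓ(aρ^γ) = 0`. -/
theorem stmt_5 (μ γ a : ℝ) (hμ : 0 < μ) (hγ : 1 < γ) (ha : 0 < a)
    (ρ u v : ℝ → ℝ → ℝ)
    (hρ : ContDiff ℝ 2 (Function.uncurry ρ)) (hu : ContDiff ℝ 2 (Function.uncurry u))
    (hρpos : ∀ t x, 0 < ρ t x)
    (hmass : ∀ t x, deriv (fun s => ρ s x) t + deriv (fun y => ρ t y * u t y) x = 0)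
    (hmom : ∀ t x,
      deriv (fun s => ρ s x * u s x) t
        + deriv (fun y => ρ t y * u t y ^ 2) x
        - deriv (fun y => μ * ρ t y ^ γ * deriv (fun z => u t z) y) x
        + deriv (fun y => a * ρ t y ^ γ) x = 0)
    (hv : ∀ t x, v t x = u t x + (μ / (γ - 1)) * deriv (fun y => ρ t y ^ (γ - 1)) x) :
    ∀ t x,
      ρ t x * deriv (fun s => v s x) t + ρ t x * u t x * deriv (fun y => v t y) x
        + deriv (fun y => a * ρ t y ^ γ) x = 0 := by
  intro t x
  -- basic slice regularity
  have hrX : ∀ T, ContDiff ℝ 2 (fun y => ρ T y) := fun T => NS_sliceX hρ T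
  have huX : ∀ T, ContDiff ℝ 2 (fun y => u T y) := fun T => NS_sliceX hu T
  have hrT : ∀ y, ContDiff ℝ 2 (fun s => ρ s y) := fun y => NS_sliceT hρ y
  have huT : ∀ y, ContDiff ℝ 2 (fun s => u s y) := fun y => NS_sliceT hu y
  -- pointwise HasDerivAt facts in space
  have hRd : ∀ T y, HasDerivAt (fun z => ρ T z) (deriv (fun z => ρ T z) y) y :=
    fun T y => (((hrX T).differentiable two_ne_zero) y).hasDerivAt
  have hUd : ∀ T y, HasDerivAt (fun z => u T z) (deriv (fun z => u T z) y) y :=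
    fun T y => (((huX T).differentiable two_ne_zero) y).hasDerivAt
  have hRxd : ∀ y, HasDerivAt (fun z => deriv (fun w => ρ t w) z)
      (deriv (deriv (fun w => ρ t w)) y) y :=
    fun y => (((NS_derivC1 (hrX t)).differentiable one_ne_zero) y).hasDerivAt
  have hUxd : ∀ y, HasDerivAt (fun z => deriv (fun w => u t w) z)
      (deriv (deriv (fun w => u t w)) y) y :=
    fun y => (((NS_derivC1 (huX t)).differentiable one_ne_zero) y).hasDerivAt
  have hRtd : ∀ y, HasDerivAt (fun s => ρ s y) (deriv (fun s => ρ s y) t) t :=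
    fun y => (((hrT y).differentiable two_ne_zero) t).hasDerivAt
  have hUtd : HasDerivAt (fun s => u s x) (deriv (fun s => u s x) t) t :=
    (((huT x).differentiable two_ne_zero) t).hasDerivAt
  have hRne : ∀ T y, ρ T y ≠ 0 := fun T y => ne_of_gt (hρpos T y)
  -- mass equation, pointwise form
  have mass' : ∀ y, deriv (fun s => ρ s y) t
      = -(deriv (fun z => ρ t z) y * u t y + ρ t y * deriv (fun z => u t z) y) := by
    intro y
    have h := hmass t y
    have h2 : deriv (fun z => ρ t z * u t z) y
        = deriv (fun z => ρ t z) y * u t y + ρ t y * deriv (fun z => u t z) y :=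
      ((hRd t y).mul (hUd t y)).deriv
    rw [h2] at h; linarith
  -- x-derivative of ρ^(γ-1)
  have gxs : ∀ y, deriv (fun z => ρ t z ^ (γ - 1)) y
      = deriv (fun z => ρ t z) y * (γ - 1) * ρ t y ^ (γ - 2) := by
    intro y
    have := ((hRd t y).rpow_const (p := γ - 1) (Or.inl (hRne t y))).deriv
    rw [this, show γ - 1 - 1 = γ - 2 by ring]
  -- time derivative of ρ^(γ-1), using mass
  have gts : ∀ y, deriv (fun s => ρ s y ^ (γ - 1)) t
      = (-(deriv (fun z => ρ t z) y * u t y + ρ t y * deriv (fun z => u t z) y))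
        * (γ - 1) * ρ t y ^ (γ - 2) := by
    intro y
    have := ((hRtd y).rpow_const (p := γ - 1) (Or.inl (hRne t y))).deriv
    rw [this, mass' y, show γ - 1 - 1 = γ - 2 by ring]
  -- joint regularity of ρ^(γ-1)
  have hG : ContDiff ℝ 2 (Function.uncurry (fun s y => ρ s y ^ (γ - 1))) := by
    rw [contDiff_iff_contDiffAt]
    intro p
    exact (Real.contDiffAt_rpow_const_of_ne (hRne p.1 p.2)).comp p hρ.contDiffAt
  -- shorthand values at (t,x)
  set R := ρ t x with hR
  set Rx := deriv (fun z => ρ t z) x with hRx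
  set Rxx := deriv (deriv (fun w => ρ t w)) x with hRxx
  set W := u t x with hW
  set Wx := deriv (fun z => u t z) x with hWx
  set Wxx := deriv (deriv (fun w => u t w)) x with hWxx
  set Wt := deriv (fun s => u s x) t with hWt
  set Rt := deriv (fun s => ρ s x) t with hRt
  -- rpow ladder
  have Eadd : ∀ p : ℝ, R ^ (p + 1) = R ^ p * R := fun p => by
    rw [Real.rpow_add (hρpos t x), Real.rpow_one]
  have E1 : R ^ (γ - 2) = R ^ (γ - 3) * R := by
    rw [show γ - 2 = γ - 3 + 1 by ring, Eadd]
  have E2 : R ^ (γ - 1) = R ^ (γ - 3) * R * R := by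
    rw [show γ - 1 = γ - 3 + 1 + 1 by ring, Eadd, Eadd]
  have E3 : R ^ γ = R ^ (γ - 3) * R * R * R := by
    conv_lhs => rw [show γ = γ - 3 + 1 + 1 + 1 by ring]
    rw [Eadd, Eadd, Eadd]
  -- pressure term
  have hP : deriv (fun y => a * ρ t y ^ γ) x = a * (Rx * γ * R ^ (γ - 1)) := by
    exact (((hRd t x).rpow_const (p := γ) (Or.inl (hRne t x))).const_mul a).deriv
  -- viscous term
  have hVisc : deriv (fun y => μ * ρ t y ^ γ * deriv (fun z => u t z) y) x
      = μ * (Rx * γ * R ^ (γ - 1)) * Wx + μ * R ^ γ * Wxx := by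
    exact ((((hRd t x).rpow_const (p := γ) (Or.inl (hRne t x))).const_mul μ).mul (hUxd x)).deriv
  -- convective term
  have hConv : deriv (fun y => ρ t y * u t y ^ 2) x
      = Rx * W ^ 2 + R * ((2 : ℕ) * W ^ 1 * Wx) := by
    exact ((hRd t x).mul ((hUd t x).pow 2)).deriv
  -- time term of momentum
  have hTime : deriv (fun s => ρ s x * u s x) t = Rt * W + R * Wt :=
    ((hRtd x).mul hUtd).deriv
  -- spatial derivative of v
  have hvx : deriv (fun y => v t y) x
      = Wx + (μ / (γ - 1)) * ((Rxx * (γ - 1) * R ^ (γ - 2))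
          + (Rx * (γ - 1)) * (Rx * (γ - 2) * R ^ (γ - 3))) := by
    have hfun : (fun y => v t y)
        = fun y => u t y + (μ / (γ - 1))
            * (deriv (fun z => ρ t z) y * (γ - 1) * ρ t y ^ (γ - 2)) := by
      funext y; rw [hv t y, gxs y]
    rw [hfun]
    have h1 : HasDerivAt (fun y => deriv (fun z => ρ t z) y * (γ - 1) * ρ t y ^ (γ - 2))
        ((Rxx * (γ - 1)) * R ^ (γ - 2)
          + (Rx * (γ - 1)) * (Rx * (γ - 2) * R ^ (γ - 2 - 1))) x := by
      exact ((hRxd x).mul_const (γ - 1)).mul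
        ((hRd t x).rpow_const (p := γ - 2) (Or.inl (hRne t x)))
    have h2 := (hUd t x).add (h1.const_mul (μ / (γ - 1)))
    simp only [Pi.add_def] at h2
    rw [h2.deriv, show γ - 2 - 1 = γ - 3 by ring]
  -- time derivative of v
  have hvt : deriv (fun s => v s x) t
      = Wt + (μ / (γ - 1)) *
        ( (-(Rxx * W + Rx * Wx + (Rx * Wx + R * Wxx)) * (γ - 1)) * R ^ (γ - 2)
          + (-(Rx * W + R * Wx) * (γ - 1)) * (Rx * (γ - 2) * R ^ (γ - 3)) ) := by
    have hfun : (fun s => v s x)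
        = fun s => u s x + (μ / (γ - 1)) * deriv (fun y => ρ s y ^ (γ - 1)) x :=
      funext (fun s => hv s x)
    have hD : HasDerivAt (fun s => deriv (fun y => ρ s y ^ (γ - 1)) x)
        (deriv (fun s => deriv (fun y => ρ s y ^ (γ - 1)) x) t) t :=
      ((NS_diffT (f := fun s y => ρ s y ^ (γ - 1)) hG x) t).hasDerivAt
    have h2 := hUtd.add (hD.const_mul (μ / (γ - 1)))
    simp only [Pi.add_def] at h2
    rw [hfun, h2.deriv]
    congr 1
    rw [NS_deriv_swap (f := fun s y => ρ s y ^ (γ - 1)) hG t x]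
    congr 1
    have hfun2 : (fun y => deriv (fun s => ρ s y ^ (γ - 1)) t)
        = fun y => (-(deriv (fun z => ρ t z) y * u t y + ρ t y * deriv (fun z => u t z) y))
            * (γ - 1) * ρ t y ^ (γ - 2) := funext gts
    rw [hfun2]
    have h3 : HasDerivAt (fun y =>
        (-(deriv (fun z => ρ t z) y * u t y + ρ t y * deriv (fun z => u t z) y))
          * (γ - 1) * ρ t y ^ (γ - 2))
        ( ((-(Rxx * W + Rx * Wx + (Rx * Wx + R * Wxx))) * (γ - 1)) * R ^ (γ - 2)
          + ((-(Rx * W + R * Wx)) * (γ - 1)) * (Rx * (γ - 2) * R ^ (γ - 2 - 1))) x := by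
      exact ((((hRxd x).mul (hUd t x)).add ((hRd t x).mul (hUxd x))).neg.mul_const (γ - 1)).mul
        ((hRd t x).rpow_const (p := γ - 2) (Or.inl (hRne t x)))
    rw [h3.deriv, show γ - 2 - 1 = γ - 3 by ring]
  -- assemble
  have hmassx : Rt = -(Rx * W + R * Wx) := by
    rw [hRt, hRx, hW, hWx]; exact mass' x
  have hmomentum := hmom t x
  rw [hTime, hConv, hVisc, hP, hmassx] at hmomentum
  rw [E2, E3] at hmomentum
  rw [hvt, hvx, hP, E2, E1]
  have hμγ : μ / (γ - 1) * (γ - 1) = μ := div_mul_cancel₀ μ (ne_of_gt (by linarith))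
  push_cast at hmomentum
  linear_combination hmomentum
    + (-(γ * R ^ (γ - 3) * R * R * Rx * Wx) - R ^ (γ - 3) * R * R * R * Wxx) * hμγ
end
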